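/- Let Δ be a shellable pure simplicial complex with shelling F_1,...,F_m, and for i ≥ 2 let c_i be the number of minimal generators of ⟨F_1,...,F_{i−1}⟩ ∩ ⟨F_i⟩ (set c_1 = 0). Then the h-polynomial of K[Δ] equals Σ_{i=1}^m t^{c_i} (McMullen–Walkup). -/

import Mathlib

open MvPolynomial

/-- The Stanley–Reisner ideal of a collection `Δ` of subsets of `Fin n`. -/
noncomputable def srIdeal (K : Type) [Field K] (n : ℕ) (Δ : Set (Finset (Fin n))) :
    Ideal (MvPolynomial (Fin n) K) :=
  Ideal.span {p | ∃ F : Finset (Fin n), F ∉ Δ ∧ p = ∏ i ∈ F, X i}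

/-- Dimension of the degree-`k` graded component of `S/I`, `S = K[x_1,…,x_n]`. -/
noncomputable def hilbFn (K : Type) [Field K] (n : ℕ) (I : Ideal (MvPolynomial (Fin n) K))
    (k : ℕ) : ℕ :=
  Module.finrank K
    ((homogeneousSubmodule (Fin n) K k) ⧸
      (Submodule.comap (homogeneousSubmodule (Fin n) K k).subtype (Submodule.restrictScalars K I)))

/-- The Hilbert–Poincaré series of `S/I`, as an integer power series. -/
noncomputable def hilbSeries (K : Type) [Field K] (n : ℕ) (I : Ideal (MvPolynomial (Fin n) K)) :
    PowerSeries ℤ :=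
  PowerSeries.mk fun k => (hilbFn K n I k : ℤ)

open scoped Classical in
/-- `restCard F i` is the size of the restriction of the facet `F i` in the shelling
`F 0, …, F (i-1), F i, …`: the number of vertices `v ∈ F i` with
`F i \ {v} ∈ ⟨F 0, …, F (i-1)⟩`; equivalently, the number of minimal generators of
`⟨F 0, …, F (i-1)⟩ ∩ ⟨F i⟩`. -/
noncomputable def restCard {n : ℕ} (F : ℕ → Finset (Fin n)) (i : ℕ) : ℕ :=
  ((F i).filter fun v => ∃ j < i, (F i).erase v ⊆ F j).card


namespace MW

variable {n : ℕ}

/-- indicator finsupp of a finset -/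
noncomputable def ind (s : Finset (Fin n)) : Fin n →₀ ℕ := ∑ v ∈ s, Finsupp.single v 1

lemma ind_apply (s : Finset (Fin n)) (x : Fin n) : ind s x = if x ∈ s then 1 else 0 := by
  classical
  simp [ind, Finsupp.finset_sum_apply, Finsupp.single_apply, Finset.sum_ite_eq', eq_comm]

lemma support_ind (s : Finset (Fin n)) : (ind s).support = s := by
  ext x
  simp [Finsupp.mem_support_iff, ind_apply]

lemma degree_ind (s : Finset (Fin n)) : (ind s).degree = s.card := by
  rw [Finsupp.degree_apply, support_ind]
  simp only [ind_apply]
  rw [Finset.sum_congr rfl (fun x hx => if_pos hx)]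
  simp

lemma ind_le {s : Finset (Fin n)} {α : Fin n →₀ ℕ} (h : s ⊆ α.support) : ind s ≤ α := by
  intro x
  rw [ind_apply]
  split
  · next hx => exact Nat.one_le_iff_ne_zero.2 (Finsupp.mem_support_iff.1 (h hx))
  · exact Nat.zero_le _

variable {K : Type} [Field K]

lemma prod_X_eq (s : Finset (Fin n)) :
    (∏ i ∈ s, (X i : MvPolynomial (Fin n) K)) = monomial (ind s) 1 := by
  classical
  induction s using Finset.induction with
  | empty => simp [ind]
  | insert x s hx ih =>
    rw [Finset.prod_insert hx, ih, X, monomial_mul, one_mul]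
    simp only [ind, Finset.sum_insert hx]

lemma monomial_mem_srIdeal {Δ : Set (Finset (Fin n))} {α : Fin n →₀ ℕ} (h : α.support ∉ Δ)
    (c : K) : (monomial α c : MvPolynomial (Fin n) K) ∈ srIdeal K n Δ := by
  have hle : ind α.support ≤ α := ind_le le_rfl
  have : (monomial α c : MvPolynomial (Fin n) K)
      = (∏ i ∈ α.support, (X i : MvPolynomial (Fin n) K)) * monomial (α - ind α.support) c := by
    rw [prod_X_eq, monomial_mul, one_mul, add_tsub_cancel_of_le hle]
  rw [this]
  exact Ideal.mul_mem_right _ _ (Ideal.subset_span ⟨α.support, h, rfl⟩)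

lemma mem_srIdeal_iff {Δ : Set (Finset (Fin n))}
    (hdown : ∀ F F' : Finset (Fin n), F' ∈ Δ → F ⊆ F' → F ∈ Δ)
    (p : MvPolynomial (Fin n) K) :
    p ∈ srIdeal K n Δ ↔ ∀ α ∈ p.support, α.support ∉ Δ := by
  classical
  constructor
  · intro hp
    refine Submodule.span_induction ?_ ?_ ?_ ?_ hp
    · rintro x ⟨G, hG, rfl⟩ α hα
      rw [prod_X_eq] at hα
      have := support_monomial_subset hα
      simp only [Finset.mem_singleton] at this
      subst this
      rwa [support_ind]
    · simp
    · intro x y _ _ hx hy α hα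
      rcases Finset.mem_union.1 (MvPolynomial.support_add hα) with h | h
      exacts [hx α h, hy α h]
    · intro q x _ hx α hα
      have h2 := MvPolynomial.support_mul q x hα
      rw [Finset.mem_add] at h2
      obtain ⟨β, hβ, γ, hγ, rfl⟩ := h2
      intro hmem
      exact hx γ hγ (hdown _ _ hmem (by
        intro v hv
        rw [Finsupp.mem_support_iff] at hv ⊢
        simp only [Finsupp.add_apply]
        omega))
  · intro h
    rw [MvPolynomial.as_sum p]
    exact Ideal.sum_mem _ fun α hα => monomial_mem_srIdeal (h α hα) _


open scoped Classical in
noncomputable def Rset (F : ℕ → Finset (Fin n)) (i : ℕ) : Finset (Fin n) :=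
  (F i).filter fun v => ∃ j < i, (F i).erase v ⊆ F j

section
variable {m : ℕ} {Δ : Set (Finset (Fin n))} {F : ℕ → Finset (Fin n)}
  (hdown : ∀ F F' : Finset (Fin n), F' ∈ Δ → F ⊆ F' → F ∈ Δ)
  (hfacets : ∀ G : Finset (Fin n),
      (G ∈ Δ ∧ ∀ G' ∈ Δ, G ⊆ G' → G = G') ↔ ∃ i < m, G = F i)
  (hshell : ∀ i, 0 < i → i < m → ∃ R : Finset (Fin n), R ⊆ F i ∧ R.Nonempty ∧
      ∀ S : Finset (Fin n), ((S ⊆ F i ∧ ∃ j < i, S ⊆ F j) ↔ ∃ v ∈ R, S ⊆ F i \ {v}))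

include hfacets in
lemma facet_mem {i : ℕ} (hi : i < m) : F i ∈ Δ :=
  ((hfacets (F i)).2 ⟨i, hi, rfl⟩).1

include hfacets in
lemma exists_facet {G : Finset (Fin n)} (hG : G ∈ Δ) : ∃ i < m, G ⊆ F i := by
  classical
  have hfin : ({H | H ∈ Δ ∧ G ⊆ H} : Set (Finset (Fin n))).Finite := Set.toFinite _
  obtain ⟨H, hH, hmax⟩ := Set.Finite.exists_maximalFor Finset.card _ hfin ⟨G, hG, le_rfl⟩
  have hfacet : H ∈ Δ ∧ ∀ G' ∈ Δ, H ⊆ G' → H = G' := by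
    refine ⟨hH.1, fun G' hG' hsub => ?_⟩
    have : G' ∈ {H | H ∈ Δ ∧ G ⊆ H} := ⟨hG', hH.2.trans hsub⟩
    exact Finset.eq_of_subset_of_card_le hsub
      (hmax this (Finset.card_le_card hsub))
  obtain ⟨i, hi, rfl⟩ := (hfacets H).1 hfacet
  exact ⟨i, hi, hH.2⟩

-- interval membership at the least facet index
include hfacets in
lemma exists_interval {G : Finset (Fin n)} (hG : G ∈ Δ) :
    ∃ i < m, Rset F i ⊆ G ∧ G ⊆ F i := by
  classical
  have hex : ∃ i, i < m ∧ G ⊆ F i := by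
    obtain ⟨i, hi, h⟩ := exists_facet hfacets hG; exact ⟨i, hi, h⟩
  let i0 := Nat.find hex
  obtain ⟨hi0, hsub⟩ := Nat.find_spec hex
  refine ⟨i0, hi0, ?_, hsub⟩
  intro v hv
  rw [Rset, Finset.mem_filter] at hv
  obtain ⟨hvF, j, hj, herase⟩ := hv
  by_contra hvG
  have : G ⊆ (F i0).erase v := fun x hx =>
    Finset.mem_erase.2 ⟨fun h => hvG (h ▸ hx), hsub hx⟩
  exact Nat.find_min hex (m := j) hj ⟨hj.trans hi0, this.trans herase⟩

include hshell in
lemma interval_disjoint {G : Finset (Fin n)} {i j : ℕ} (hij : i < j) (hj : j < m)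
    (hGi : G ⊆ F i) (hRj : Rset F j ⊆ G) (hGj : G ⊆ F j) : False := by
  classical
  obtain ⟨R', hR'F, _, hR'⟩ := hshell j (Nat.zero_lt_of_lt hij) hj
  obtain ⟨v, hvR', hGv⟩ := (hR' G).1 ⟨hGj, i, hij, hGi⟩
  have hvRj : v ∈ Rset F j := by
    rw [Rset, Finset.mem_filter]
    refine ⟨hR'F hvR', ?_⟩
    have : (F j).erase v ⊆ F j ∧ ∃ j' < j, (F j).erase v ⊆ F j' :=
      (hR' ((F j).erase v)).2 ⟨v, hvR', by rw [← Finset.erase_eq]⟩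
    exact this.2
  have hvG : v ∈ G := hRj hvRj
  have := hGv hvG
  simp at this

include hdown hfacets in
lemma interval_mem {G : Finset (Fin n)} {i : ℕ} (hi : i < m) (hGi : G ⊆ F i) : G ∈ Δ :=
  hdown _ _ (facet_mem hfacets hi) hGi

end

lemma degree_eq_sum_univ (f : Fin n →₀ ℕ) : f.degree = ∑ x : Fin n, f x :=
  Finset.sum_subset (Finset.subset_univ _) (fun x _ hx => Finsupp.notMem_support_iff.1 hx)

lemma degree_add (f g : Fin n →₀ ℕ) : (f + g).degree = f.degree + g.degree := by
  simp [degree_eq_sum_univ, Finset.sum_add_distrib]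

lemma degree_ind' (s : Finset (Fin n)) : (ind s).degree = s.card := by
  rw [degree_eq_sum_univ]
  simp only [ind_apply]
  simp

open scoped Classical in
noncomputable def intervalF (F : ℕ → Finset (Fin n)) (i k : ℕ) : Finset (Fin n →₀ ℕ) :=
  (Finset.finsuppAntidiag (Finset.univ : Finset (Fin n)) k).filter
    (fun α => Rset F i ⊆ α.support ∧ α.support ⊆ F i)

lemma mem_intervalF {F : ℕ → Finset (Fin n)} {i k : ℕ} {α : Fin n →₀ ℕ} :
    α ∈ intervalF F i k ↔ α.degree = k ∧ Rset F i ⊆ α.support ∧ α.support ⊆ F i := by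
  classical
  have : (Finset.univ : Finset (Fin n)).sum α = α.degree := (degree_eq_sum_univ α).symm
  simp [intervalF, Finset.mem_finsuppAntidiag, this]

lemma intervalF_card_of_le {F : ℕ → Finset (Fin n)} {i k : ℕ} (hRF : Rset F i ⊆ F i)
    (h : (Rset F i).card ≤ k) :
    (intervalF F i k).card = (Finset.finsuppAntidiag (F i) (k - (Rset F i).card)).card := by
  classical
  set R := Rset F i
  set c := R.card
  refine Finset.card_bij' (fun α _ => α - ind R) (fun l _ => l + ind R) ?_ ?_ ?_ ?_
  · intro α hα
    rw [mem_intervalF] at hα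
    obtain ⟨hdeg, hR, hF⟩ := hα
    have hle : ind R ≤ α := ind_le hR
    have hsum : (α - ind R) + ind R = α := tsub_add_cancel_of_le hle
    have hsupp2 : (α - ind R).support ⊆ F i := by
      intro x hx
      rw [Finsupp.mem_support_iff] at hx
      simp only [Finsupp.coe_tsub, Pi.sub_apply] at hx
      exact hF (Finsupp.mem_support_iff.2 (by omega))
    rw [Finset.mem_finsuppAntidiag]
    refine ⟨?_, hsupp2⟩
    have h1 : (α - ind R).degree + (ind R).degree = k := by rw [← degree_add, hsum, hdeg]
    have h2 : (ind R).degree = c := degree_ind' R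
    have h3 : ∑ x ∈ F i, (α - ind R) x = (α - ind R).degree :=
      (Finset.sum_subset hsupp2 (fun x _ hx => Finsupp.notMem_support_iff.1 hx)).symm
    show ∑ x ∈ F i, (α - ind R) x = k - c
    omega
  · intro l hl
    rw [Finset.mem_finsuppAntidiag] at hl
    obtain ⟨hsum, hsupp⟩ := hl
    rw [mem_intervalF]
    have hsupport : ∀ x, (l + ind R) x ≠ 0 ↔ x ∈ l.support ∪ R := by
      intro x
      simp only [Finsupp.add_apply, ind_apply, Finset.mem_union, Finsupp.mem_support_iff]
      split <;> simp_all <;> omega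
    refine ⟨?_, ?_, ?_⟩
    · have hld : l.degree = k - c := by
        rw [← hsum]
        exact Finset.sum_subset hsupp (fun x _ hx => Finsupp.notMem_support_iff.1 hx)
      rw [degree_add, degree_ind', hld]
      show k - c + R.card = k
      have : R.card = c := rfl
      omega
    · intro x hx
      rw [Finsupp.mem_support_iff, hsupport]
      exact Finset.mem_union_right _ hx
    · intro x hx
      rw [Finsupp.mem_support_iff, hsupport] at hx
      rcases Finset.mem_union.1 hx with h' | h'
      exacts [hsupp h', hRF h']
  · intro α hα
    rw [mem_intervalF] at hα
    exact tsub_add_cancel_of_le (ind_le hα.2.1)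
  · intro l hl
    simp
lemma intervalF_card_of_lt {F : ℕ → Finset (Fin n)} {i k : ℕ}
    (h : k < (Rset F i).card) : (intervalF F i k).card = 0 := by
  rw [Finset.card_eq_zero, Finset.eq_empty_iff_forall_notMem]
  intro α hα
  rw [mem_intervalF] at hα
  obtain ⟨hdeg, hR, _⟩ := hα
  have : (Rset F i).card ≤ α.degree := by
    rw [Finsupp.degree]
    calc (Rset F i).card = ∑ _x ∈ Rset F i, 1 := by simp
    _ ≤ ∑ x ∈ Rset F i, α x := Finset.sum_le_sum (fun x hx =>
        Nat.one_le_iff_ne_zero.2 (Finsupp.mem_support_iff.1 (hR hx)))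
    _ ≤ _ := Finset.sum_le_sum_of_subset hR
  omega


open scoped Classical in
noncomputable def goodF {n : ℕ} (Δ : Set (Finset (Fin n))) (k : ℕ) : Finset (Fin n →₀ ℕ) :=
  (Finset.finsuppAntidiag (Finset.univ : Finset (Fin n)) k).filter (fun α => α.support ∈ Δ)

lemma mem_goodF {Δ : Set (Finset (Fin n))} {k : ℕ} {α : Fin n →₀ ℕ} :
    α ∈ goodF Δ k ↔ α.degree = k ∧ α.support ∈ Δ := by
  classical
  have : (Finset.univ : Finset (Fin n)).sum α = α.degree := by
    rw [Finsupp.degree]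
    exact (Finset.sum_subset (Finset.subset_univ _)
      (fun x _ hx => Finsupp.notMem_support_iff.1 hx)).symm
  simp [goodF, Finset.mem_finsuppAntidiag, this]

lemma hilbFn_eq {Δ : Set (Finset (Fin n))}
    (hdown : ∀ F F' : Finset (Fin n), F' ∈ Δ → F ⊆ F' → F ∈ Δ) (k : ℕ) :
    hilbFn K n (srIdeal K n Δ) k = (goodF Δ k).card := by
  classical
  set V := homogeneousSubmodule (Fin n) K k
  set φ : V →ₗ[K] ({α // α ∈ goodF Δ k} → K) :=
    LinearMap.pi (fun g => (lcoeff K g.1).comp V.subtype) with hφ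
  have hker : LinearMap.ker φ =
      Submodule.comap V.subtype (Submodule.restrictScalars K (srIdeal K n Δ)) := by
    ext p
    have hhom : ∀ α, coeff α (p : MvPolynomial (Fin n) K) ≠ 0 → α.degree = k := by
      intro α hα
      by_contra hne
      exact hα (((mem_homogeneousSubmodule k _).1 p.2).coeff_eq_zero hne)
    simp only [LinearMap.mem_ker, Submodule.mem_comap, Submodule.restrictScalars_mem,
      mem_srIdeal_iff hdown, hφ]
    constructor
    · intro h α hα
      intro hmem
      have hg : α ∈ goodF Δ k := mem_goodF.2 ⟨hhom α (Finsupp.mem_support_iff.1 hα), hmem⟩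
      have := congrFun h ⟨α, hg⟩
      simp only [LinearMap.pi_apply, LinearMap.comp_apply, Submodule.subtype_apply,
        lcoeff_apply, Pi.zero_apply] at this
      exact Finsupp.mem_support_iff.1 hα this
    · intro h
      funext g
      simp only [LinearMap.pi_apply, LinearMap.comp_apply, Submodule.subtype_apply,
        lcoeff_apply, Pi.zero_apply]
      by_contra hc
      exact h _ (Finsupp.mem_support_iff.2 hc) (mem_goodF.1 g.2).2
  have hsurj : Function.Surjective φ := by
    intro f
    have hmem : (∑ g : {α // α ∈ goodF Δ k}, monomial g.1 (f g)) ∈ V := by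
      refine Submodule.sum_mem _ fun g _ => ?_
      rw [mem_homogeneousSubmodule]
      exact isHomogeneous_monomial _ (mem_goodF.1 g.2).1
    refine ⟨⟨_, hmem⟩, ?_⟩
    funext g'
    simp only [hφ, LinearMap.pi_apply, LinearMap.comp_apply, Submodule.subtype_apply,
      lcoeff_apply]
    rw [MvPolynomial.coeff_sum]
    rw [Finset.sum_eq_single g']
    · simp [coeff_monomial]
    · intro g _ hne
      rw [coeff_monomial, if_neg]
      intro h
      exact hne (Subtype.ext h)
    · intro h
      exact absurd (Finset.mem_univ g') h
  rw [hilbFn, ← hker]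
  rw [(φ.quotKerEquivOfSurjective hsurj).finrank_eq]
  rw [Module.finrank_fintype_fun_eq_card, Fintype.card_coe]


noncomputable def Gser : PowerSeries ℤ := PowerSeries.mk fun _ => 1

lemma Gser_mul_one_sub_X : Gser * (1 - PowerSeries.X) = 1 := by
  ext k
  cases k with
  | zero => simp [Gser, PowerSeries.coeff_zero_eq_constantCoeff]
  | succ k =>
    rw [mul_sub, mul_one, map_sub, PowerSeries.coeff_succ_mul_X]
    simp [Gser, PowerSeries.coeff_one]

lemma coeff_prod_Gser {n : ℕ} (s : Finset (Fin n)) (k : ℕ) :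
    PowerSeries.coeff k (∏ _v ∈ s, Gser) = ((Finset.finsuppAntidiag s k).card : ℤ) := by
  classical
  rw [PowerSeries.coeff_prod]
  simp [Gser]


lemma Rset_subset {n : ℕ} (F : ℕ → Finset (Fin n)) (i : ℕ) : Rset F i ⊆ F i :=
  Finset.filter_subset _ _

lemma restCard_eq {n : ℕ} (F : ℕ → Finset (Fin n)) (i : ℕ) :
    restCard F i = (Rset F i).card := rfl

section main
variable {n m : ℕ} {K : Type} [Field K] {Δ : Set (Finset (Fin n))} {F : ℕ → Finset (Fin n)}

lemma count_partition
    (hdown : ∀ F F' : Finset (Fin n), F' ∈ Δ → F ⊆ F' → F ∈ Δ)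
    (hfacets : ∀ G : Finset (Fin n),
      (G ∈ Δ ∧ ∀ G' ∈ Δ, G ⊆ G' → G = G') ↔ ∃ i < m, G = F i)
    (hshell : ∀ i, 0 < i → i < m → ∃ R : Finset (Fin n), R ⊆ F i ∧ R.Nonempty ∧
      ∀ S : Finset (Fin n), ((S ⊆ F i ∧ ∃ j < i, S ⊆ F j) ↔ ∃ v ∈ R, S ⊆ F i \ {v}))
    (k : ℕ) :
    (goodF Δ k).card = ∑ i ∈ Finset.range m, (intervalF F i k).card := by
  classical
  have hcover : goodF Δ k = (Finset.range m).biUnion (fun i => intervalF F i k) := by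
    ext α
    rw [mem_goodF, Finset.mem_biUnion]
    constructor
    · rintro ⟨hdeg, hmem⟩
      obtain ⟨i, hi, hR, hF⟩ := exists_interval hfacets hmem
      exact ⟨i, Finset.mem_range.2 hi, mem_intervalF.2 ⟨hdeg, hR, hF⟩⟩
    · rintro ⟨i, hi, hα⟩
      rw [mem_intervalF] at hα
      exact ⟨hα.1, hdown _ _ (facet_mem hfacets (Finset.mem_range.1 hi)) hα.2.2⟩
  rw [hcover]
  refine Finset.card_biUnion ?_
  intro i hi j hj hne
  rw [Function.onFun, Finset.disjoint_left]
  intro α hαi hαj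
  rw [mem_intervalF] at hαi hαj
  rcases Nat.lt_or_ge i j with h | h
  · exact interval_disjoint hshell h (Finset.mem_range.1 hj) hαi.2.2 hαj.2.1 hαj.2.2
  · have h' : j < i := lt_of_le_of_ne h (Ne.symm hne)
    exact interval_disjoint hshell h' (Finset.mem_range.1 hi) hαj.2.2 hαi.2.1 hαi.2.2
end main

end MW

/-- McMullen–Walkup: if `Δ` is a pure shellable simplicial complex on `[n]` with shelling
`F 0, …, F (m-1)` (facets of cardinality `d`), and `c i` is the number of minimal generators of
`⟨F 0, …, F (i-1)⟩ ∩ ⟨F i⟩` (with `c 0 = 0`), then the `h`-polynomial of `K[Δ]` — the numerator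
of the Hilbert–Poincaré series `HP(t) = h(t)/(1-t)^d` — equals `Σ_{i=1}^m t^{c i}`. -/
theorem mcMullen_walkup (K : Type) [Field K] (n d m : ℕ)
    (Δ : Set (Finset (Fin n)))
    (hdown : ∀ F F' : Finset (Fin n), F' ∈ Δ → F ⊆ F' → F ∈ Δ)
    (hvert : ∀ i : Fin n, ({i} : Finset (Fin n)) ∈ Δ)
    (F : ℕ → Finset (Fin n))
    (hinj : ∀ i < m, ∀ j < m, F i = F j → i = j)
    (hfacets : ∀ G : Finset (Fin n),
      (G ∈ Δ ∧ ∀ G' ∈ Δ, G ⊆ G' → G = G') ↔ ∃ i < m, G = F i)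
    (hpure : ∀ i < m, (F i).card = d)
    (hshell : ∀ i, 0 < i → i < m → ∃ R : Finset (Fin n), R ⊆ F i ∧ R.Nonempty ∧
      ∀ S : Finset (Fin n), ((S ⊆ F i ∧ ∃ j < i, S ⊆ F j) ↔ ∃ v ∈ R, S ⊆ F i \ {v})) :
    hilbSeries K n (srIdeal K n Δ) * (1 - PowerSeries.X) ^ d =
      ∑ i ∈ Finset.range m, PowerSeries.X ^ restCard F i := by
  classical
  have hseries : hilbSeries K n (srIdeal K n Δ) =
      ∑ i ∈ Finset.range m, PowerSeries.X ^ restCard F i * ∏ _v ∈ F i, MW.Gser := by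
    ext k
    rw [hilbSeries, PowerSeries.coeff_mk, MW.hilbFn_eq hdown k,
      MW.count_partition hdown hfacets hshell k, map_sum, Nat.cast_sum]
    refine Finset.sum_congr rfl ?_
    intro i hi
    rw [PowerSeries.coeff_X_pow_mul', MW.coeff_prod_Gser, MW.restCard_eq]
    rcases Nat.lt_or_ge k (MW.Rset F i).card with h | h
    · rw [if_neg (by omega), MW.intervalF_card_of_lt h, Nat.cast_zero]
    · rw [if_pos h, MW.intervalF_card_of_le (MW.Rset_subset F i) h]
  rw [hseries, Finset.sum_mul]
  refine Finset.sum_congr rfl ?_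
  intro i hi
  have hd : (1 - PowerSeries.X : PowerSeries ℤ) ^ d = ∏ _v ∈ F i, (1 - PowerSeries.X) := by
    rw [Finset.prod_const, hpure i (Finset.mem_range.1 hi)]
  rw [mul_assoc, hd, ← Finset.prod_mul_distrib]
  simp [MW.Gser_mul_one_sub_X]
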